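/- Let γ_α, γ_β, α, β be complex numbers satisfying tanh(γ_α/4)/tanh(γ_β/4) = tan(α/2)/tan(β/2) with tan(α/2) and tan(β/2) nonzero real numbers (the Tangent Rule). Write γ_α = r_α + i·φ_α and γ_β = r_β + i·φ_β with r_α, r_β > 0 real and φ_α, φ_β real. Then sin(φ_α/2)/sinh(r_α/2) = sin(φ_β/2)/sinh(r_β/2). -/

import Mathlib

open Complex Real

lemma tanh_parts (x y : ℝ) :
    (Complex.tanh ((x : ℂ) + (y : ℂ) * Complex.I)).re =
      Real.sinh x * Real.cosh x /
        (Real.cosh x ^ 2 * Real.cos y ^ 2 + Real.sinh x ^ 2 * Real.sin y ^ 2) ∧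
    (Complex.tanh ((x : ℂ) + (y : ℂ) * Complex.I)).im =
      Real.sin y * Real.cos y /
        (Real.cosh x ^ 2 * Real.cos y ^ 2 + Real.sinh x ^ 2 * Real.sin y ^ 2) := by
  set z : ℂ := (x : ℂ) + (y : ℂ) * Complex.I
  have hS : Complex.sinh z = ((Real.sinh x * Real.cos y : ℝ) : ℂ) +
      ((Real.cosh x * Real.sin y : ℝ) : ℂ) * Complex.I := by
    rw [show z = (x : ℂ) + (y : ℂ) * Complex.I from rfl, Complex.sinh_add,
      Complex.sinh_mul_I, Complex.cosh_mul_I]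
    push_cast [← Complex.ofReal_sinh, ← Complex.ofReal_cosh, ← Complex.ofReal_sin,
      ← Complex.ofReal_cos]
    ring
  have hC : Complex.cosh z = ((Real.cosh x * Real.cos y : ℝ) : ℂ) +
      ((Real.sinh x * Real.sin y : ℝ) : ℂ) * Complex.I := by
    rw [show z = (x : ℂ) + (y : ℂ) * Complex.I from rfl, Complex.cosh_add,
      Complex.sinh_mul_I, Complex.cosh_mul_I]
    push_cast [← Complex.ofReal_sinh, ← Complex.ofReal_cosh, ← Complex.ofReal_sin,
      ← Complex.ofReal_cos]
    ring
  have hSre : (Complex.sinh z).re = Real.sinh x * Real.cos y := by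
    rw [hS]
    simp only [Complex.add_re, Complex.ofReal_re, Complex.mul_re, Complex.ofReal_im,
      Complex.I_re, Complex.I_im, mul_zero, mul_one, zero_mul, sub_zero, add_zero, zero_sub,
      zero_add, neg_zero]
  have hSim : (Complex.sinh z).im = Real.cosh x * Real.sin y := by
    rw [hS]
    simp only [Complex.add_im, Complex.ofReal_im, Complex.mul_im, Complex.ofReal_re,
      Complex.I_re, Complex.I_im, mul_zero, mul_one, zero_mul, sub_zero, add_zero, zero_sub,
      zero_add, neg_zero]
  have hCre : (Complex.cosh z).re = Real.cosh x * Real.cos y := by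
    rw [hC]
    simp only [Complex.add_re, Complex.ofReal_re, Complex.mul_re, Complex.ofReal_im,
      Complex.I_re, Complex.I_im, mul_zero, mul_one, zero_mul, sub_zero, add_zero, zero_sub,
      zero_add, neg_zero]
  have hCim : (Complex.cosh z).im = Real.sinh x * Real.sin y := by
    rw [hC]
    simp only [Complex.add_im, Complex.ofReal_im, Complex.mul_im, Complex.ofReal_re,
      Complex.I_re, Complex.I_im, mul_zero, mul_one, zero_mul, sub_zero, add_zero, zero_sub,
      zero_add, neg_zero]
  have hnormSq : Complex.normSq (Complex.cosh z) =
      Real.cosh x ^ 2 * Real.cos y ^ 2 + Real.sinh x ^ 2 * Real.sin y ^ 2 := by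
    rw [Complex.normSq_apply, hCre, hCim]; ring
  have h1 : Real.cos y ^ 2 + Real.sin y ^ 2 = 1 := by
    rw [add_comm]; exact Real.sin_sq_add_cos_sq y
  have h2 : Real.cosh x ^ 2 - Real.sinh x ^ 2 = 1 := Real.cosh_sq_sub_sinh_sq x
  rw [Complex.tanh_eq_sinh_div_cosh]
  constructor
  · rw [Complex.div_re, hnormSq, hSre, hSim, hCre, hCim]
    have : Real.sinh x * Real.cos y * (Real.cosh x * Real.cos y) +
        Real.cosh x * Real.sin y * (Real.sinh x * Real.sin y) =
        Real.sinh x * Real.cosh x := by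
      linear_combination (Real.sinh x * Real.cosh x) * h1
    rw [← add_div, this]
  · rw [Complex.div_im, hnormSq, hSre, hSim, hCre, hCim]
    have : Real.cosh x * Real.sin y * (Real.cosh x * Real.cos y) -
        Real.sinh x * Real.cos y * (Real.sinh x * Real.sin y) =
        Real.sin y * Real.cos y := by
      linear_combination (Real.sin y * Real.cos y) * h2
    rw [div_sub_div_same, this]

lemma D_pos (x y : ℝ) (hx : 0 < x) :
    0 < Real.cosh x ^ 2 * Real.cos y ^ 2 + Real.sinh x ^ 2 * Real.sin y ^ 2 := by
  have h1 : Real.cos y ^ 2 + Real.sin y ^ 2 = 1 := by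
    rw [add_comm]; exact Real.sin_sq_add_cos_sq y
  have h2 : Real.cosh x ^ 2 - Real.sinh x ^ 2 = 1 := Real.cosh_sq_sub_sinh_sq x
  have h3 : 0 < Real.sinh x := Real.sinh_pos_iff.mpr hx
  nlinarith [sq_nonneg (Real.cos y), sq_nonneg (Real.sin y)]

theorem sine_rule (α β rα rβ φα φβ : ℝ) (γα γβ : ℂ)
    (hγα : γα = (rα : ℂ) + (φα : ℂ) * Complex.I)
    (hγβ : γβ = (rβ : ℂ) + (φβ : ℂ) * Complex.I)
    (hrα : 0 < rα) (hrβ : 0 < rβ)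
    (ha : Real.tan (α/2) ≠ 0) (hb : Real.tan (β/2) ≠ 0)
    (htan : Complex.tanh (γα/4) / Complex.tanh (γβ/4) =
      (Real.tan (α/2) : ℂ) / (Real.tan (β/2) : ℂ)) :
    Real.sin (φα/2) / Real.sinh (rα/2) = Real.sin (φβ/2) / Real.sinh (rβ/2) := by
  have hzα : γα / 4 = ((rα/4 : ℝ) : ℂ) + ((φα/4 : ℝ) : ℂ) * Complex.I := by
    rw [hγα]; push_cast; ring
  have hzβ : γβ / 4 = ((rβ/4 : ℝ) : ℂ) + ((φβ/4 : ℝ) : ℂ) * Complex.I := by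
    rw [hγβ]; push_cast; ring
  set a := Complex.tanh (γα/4) with haa
  set b := Complex.tanh (γβ/4) with hbb
  have htβ : (Real.tan (β/2) : ℂ) ≠ 0 := by exact_mod_cast hb
  have hrhs : (Real.tan (α/2) : ℂ) / (Real.tan (β/2) : ℂ) ≠ 0 :=
    div_ne_zero (by exact_mod_cast ha) htβ
  have hbne : b ≠ 0 := by
    intro h; rw [h, div_zero] at htan; exact hrhs htan.symm
  set t : ℝ := Real.tan (α/2) / Real.tan (β/2) with ht
  have hab : a = (t : ℂ) * b := by
    rw [div_eq_div_iff hbne htβ] at htan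
    rw [ht, Complex.ofReal_div]
    rw [div_mul_eq_mul_div, eq_div_iff htβ]
    linear_combination htan
  have hcross : a.re * b.im = a.im * b.re := by
    rw [hab]
    simp only [Complex.mul_re, Complex.mul_im, Complex.ofReal_re, Complex.ofReal_im]
    ring
  obtain ⟨hre1, him1⟩ := tanh_parts (rα/4) (φα/4)
  obtain ⟨hre2, him2⟩ := tanh_parts (rβ/4) (φβ/4)
  rw [← hzα] at hre1 him1
  rw [← hzβ] at hre2 him2
  rw [← haa] at hre1 him1
  rw [← hbb] at hre2 him2
  set Dα := Real.cosh (rα/4) ^ 2 * Real.cos (φα/4) ^ 2 +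
    Real.sinh (rα/4) ^ 2 * Real.sin (φα/4) ^ 2 with hDα
  set Dβ := Real.cosh (rβ/4) ^ 2 * Real.cos (φβ/4) ^ 2 +
    Real.sinh (rβ/4) ^ 2 * Real.sin (φβ/4) ^ 2 with hDβ
  have hDαpos : 0 < Dα := D_pos _ _ (by linarith)
  have hDβpos : 0 < Dβ := D_pos _ _ (by linarith)
  rw [hre1, him1, hre2, him2] at hcross
  have hkey : Real.sinh (rα/4) * Real.cosh (rα/4) * (Real.sin (φβ/4) * Real.cos (φβ/4)) =
      Real.sin (φα/4) * Real.cos (φα/4) * (Real.sinh (rβ/4) * Real.cosh (rβ/4)) := by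
    rw [div_mul_div_comm, div_mul_div_comm, div_eq_div_iff
      (by positivity) (by positivity)] at hcross
    exact mul_right_cancel₀ (mul_pos hDαpos hDβpos).ne' hcross
  have hsα : 0 < Real.sinh (rα/2) := Real.sinh_pos_iff.mpr (by linarith)
  have hsβ : 0 < Real.sinh (rβ/2) := Real.sinh_pos_iff.mpr (by linarith)
  rw [div_eq_div_iff hsα.ne' hsβ.ne']
  have e1 : rα/2 = 2 * (rα/4) := by ring
  have e2 : rβ/2 = 2 * (rβ/4) := by ring
  have e3 : φα/2 = 2 * (φα/4) := by ring
  have e4 : φβ/2 = 2 * (φβ/4) := by ring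
  rw [e1, e2, e3, e4, Real.sin_two_mul, Real.sin_two_mul, Real.sinh_two_mul,
    Real.sinh_two_mul]
  linear_combination (-4) * hkey
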